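/- Let D be a finite measure space, Q : D × D → ℝ measurable with |Q| ≤ M, and α : ℝ → ℝ continuously differentiable with α'(0) = 0 and |α''| ≤ C₂. Define S(u)(z) = ∫_D Q(z,z') α(u(z')) dz' on L^∞(D). Then S is Fréchet differentiable at every u ∈ L^∞(D), with derivative (S'(u)h)(z) = ∫_D Q(z,z') α'(u(z')) h(z') dz', and ‖S(u+h) − S(u) − S'(u)h‖_∞ ≤ (M·C₂·μ(D)/2)·‖h‖_∞². -/

import Mathlib

open MeasureTheory

lemma lip_deriv {α : ℝ → ℝ} {C₂ : ℝ} (hα : ContDiff ℝ 2 α)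
    (hα'' : ∀ t : ℝ, |deriv (deriv α) t| ≤ C₂) (x y : ℝ) :
    |deriv α x - deriv α y| ≤ C₂ * |x - y| := by
  have hd : ContDiff ℝ (1:ℕ) (deriv α) := (contDiff_succ_iff_deriv.mp (by exact_mod_cast hα)).2.2
  have := Convex.norm_image_sub_le_of_norm_deriv_le (s := (Set.univ : Set ℝ))
    (f := deriv α) (fun t _ => hd.differentiable (by norm_num) t)
    (fun t _ => by simpa [Real.norm_eq_abs] using hα'' t)
    (convex_univ) (Set.mem_univ y) (Set.mem_univ x)
  simpa [Real.norm_eq_abs] using this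

lemma taylor_bd {α : ℝ → ℝ} {C₂ : ℝ} (hα : ContDiff ℝ 2 α)
    (hα'' : ∀ t : ℝ, |deriv (deriv α) t| ≤ C₂) (a b : ℝ) :
    |α (a + b) - α a - deriv α a * b| ≤ C₂ / 2 * b ^ 2 := by
  have hC₂ : 0 ≤ C₂ := le_trans (abs_nonneg _) (hα'' 0)
  have hdiff : Differentiable ℝ α := hα.differentiable (by norm_num)
  have hd : ContDiff ℝ (1:ℕ) (deriv α) := (contDiff_succ_iff_deriv.mp (by exact_mod_cast hα)).2.2
  have hcont : Continuous (deriv α) := hd.continuous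
  have key : ∀ t ∈ Set.uIcc (0:ℝ) 1,
      HasDerivAt (fun t => α (a + t * b)) (deriv α (a + t * b) * b) t := by
    intro t _
    have h1 : HasDerivAt (fun t : ℝ => a + t * b) b t := by
      simpa using ((hasDerivAt_id t).mul_const b).const_add a
    exact (hdiff (a + t * b)).hasDerivAt.comp t h1
  have hcont2 : Continuous (fun t : ℝ => deriv α (a + t * b) * b) := by
    exact (hcont.comp (by continuity)).mul continuous_const
  have hint : IntervalIntegrable (fun t : ℝ => deriv α (a + t * b) * b) volume 0 1 :=
    hcont2.intervalIntegrable 0 1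
  have ftc : ∫ t in (0:ℝ)..1, deriv α (a + t * b) * b = α (a + b) - α a := by
    rw [intervalIntegral.integral_eq_sub_of_hasDerivAt key hint]
    norm_num
  have hrepr : α (a + b) - α a - deriv α a * b
      = ∫ t in (0:ℝ)..1, (deriv α (a + t * b) - deriv α a) * b := by
    have : ∫ t in (0:ℝ)..1, (deriv α (a + t * b) - deriv α a) * b
        = (∫ t in (0:ℝ)..1, deriv α (a + t * b) * b)
          - ∫ t in (0:ℝ)..1, deriv α a * b := by
      rw [← intervalIntegral.integral_sub hint (intervalIntegrable_const)]
      congr 1; ext t; ring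
    rw [this, ftc]
    simp
  rw [hrepr]
  have habs : |∫ t in (0:ℝ)..1, (deriv α (a + t * b) - deriv α a) * b|
      ≤ ∫ t in (0:ℝ)..1, |(deriv α (a + t * b) - deriv α a) * b| :=
    intervalIntegral.abs_integral_le_integral_abs zero_le_one
  have hmono : (∫ t in (0:ℝ)..1, |(deriv α (a + t * b) - deriv α a) * b|)
      ≤ ∫ t in (0:ℝ)..1, C₂ * b ^ 2 * t := by
    apply intervalIntegral.integral_mono_on zero_le_one
    · have hc3 : Continuous fun t : ℝ => (deriv α (a + t * b) - deriv α a) * b :=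
        ((hcont.comp (by continuity)).sub continuous_const).mul continuous_const
      exact hc3.abs.intervalIntegrable 0 1
    · exact (by fun_prop : Continuous fun t : ℝ => C₂ * b ^ 2 * t).intervalIntegrable 0 1
    · intro t ht
      have h1 : |deriv α (a + t * b) - deriv α a| ≤ C₂ * (t * |b|) := by
        have := lip_deriv hα hα'' (a + t * b) a
        calc |deriv α (a + t * b) - deriv α a| ≤ C₂ * |a + t * b - a| := this
          _ = C₂ * (|t| * |b|) := by rw [show a + t * b - a = t * b by ring, abs_mul]
          _ = C₂ * (t * |b|) := by rw [abs_of_nonneg ht.1]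
      calc |(deriv α (a + t * b) - deriv α a) * b|
          = |deriv α (a + t * b) - deriv α a| * |b| := abs_mul _ _
        _ ≤ C₂ * (t * |b|) * |b| := by
            apply mul_le_mul_of_nonneg_right h1 (abs_nonneg b)
        _ = C₂ * b ^ 2 * t := by
            rw [show C₂ * (t * |b|) * |b| = C₂ * (|b| * |b|) * t from by ring,
              abs_mul_abs_self, ← sq]
  have hval : (∫ t in (0:ℝ)..1, C₂ * b ^ 2 * t) = C₂ / 2 * b ^ 2 := by
    rw [intervalIntegral.integral_const_mul, integral_id]
    ring
  calc |∫ t in (0:ℝ)..1, (deriv α (a + t * b) - deriv α a) * b|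
      ≤ ∫ t in (0:ℝ)..1, |(deriv α (a + t * b) - deriv α a) * b| := habs
    _ ≤ ∫ t in (0:ℝ)..1, C₂ * b ^ 2 * t := hmono
    _ = C₂ / 2 * b ^ 2 := hval

lemma deriv_bd {α : ℝ → ℝ} {C₂ : ℝ} (hα : ContDiff ℝ 2 α)
    (hα0 : deriv α 0 = 0) (hα'' : ∀ t : ℝ, |deriv (deriv α) t| ≤ C₂) (x : ℝ) :
    |deriv α x| ≤ C₂ * |x| := by
  simpa [hα0] using lip_deriv hα hα'' x 0

lemma alpha_bd {α : ℝ → ℝ} {C₂ : ℝ} (hα : ContDiff ℝ 2 α)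
    (hα0 : deriv α 0 = 0) (hα'' : ∀ t : ℝ, |deriv (deriv α) t| ≤ C₂) (x : ℝ) :
    |α x| ≤ |α 0| + C₂ * x ^ 2 := by
  have hC₂ : 0 ≤ C₂ := le_trans (abs_nonneg _) (hα'' 0)
  have hdiff : Differentiable ℝ α := hα.differentiable (by norm_num)
  have h1 : |α x - α 0| ≤ C₂ * |x| * |x - 0| := by
    apply Convex.norm_image_sub_le_of_norm_deriv_le (s := Set.uIcc 0 x)
      (fun t _ => hdiff t) ?_ (convex_uIcc 0 x) (Set.left_mem_uIcc) (Set.right_mem_uIcc)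
    intro t ht
    have htx : |t| ≤ |x| := by
      rcases Set.mem_uIcc.mp ht with h | h
      · rw [abs_of_nonneg h.1, abs_of_nonneg (h.1.trans h.2)]; exact h.2
      · rw [abs_of_nonpos h.2, abs_of_nonpos (h.1.trans h.2)]; linarith [h.1]
    calc ‖deriv α t‖ = |deriv α t| := rfl
      _ ≤ C₂ * |t| := deriv_bd hα hα0 hα'' t
      _ ≤ C₂ * |x| := by exact mul_le_mul_of_nonneg_left htx hC₂
  have : |α x| ≤ |α 0| + |α x - α 0| := by
    have := abs_add_le (α 0) (α x - α 0); simpa using this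
  calc |α x| ≤ |α 0| + |α x - α 0| := this
    _ ≤ |α 0| + C₂ * |x| * |x - 0| := by linarith
    _ = |α 0| + C₂ * x ^ 2 := by rw [sub_zero, show C₂ * |x| * |x| = C₂ * (|x| * |x|) from by ring,
        abs_mul_abs_self, ← sq]

/-- Fréchet differentiability (quantitative form) of the nonlinear integral
operator `S` of (2.2) on `L^∞(D)`: the candidate derivative
`(S'(u)h)(z) = ∫ Q(z,z') α'(u(z')) h(z') dz'` satisfies the second-order
remainder bound `‖S(u+h) − S(u) − S'(u)h‖_∞ ≤ (M·C₂·μ(D)/2)·‖h‖_∞²`. -/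
theorem stmt8
    {D : Type*} [MeasurableSpace D] (μ : Measure D) [IsFiniteMeasure μ]
    (Q : D → D → ℝ) (M C₂ : ℝ)
    (hQmeas : ∀ z, Measurable (Q z))
    (hQ : ∀ z z', |Q z z'| ≤ M)
    (α : ℝ → ℝ) (hα : ContDiff ℝ 2 α)
    (hα0 : deriv α 0 = 0)
    (hα'' : ∀ t : ℝ, |deriv (deriv α) t| ≤ C₂)
    (u h : D → ℝ) (hum : Measurable u) (hhm : Measurable h)
    (A B : ℝ) (huA : ∀ z, |u z| ≤ A) (hhB : ∀ z, |h z| ≤ B) :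
    ∀ z : D,
      |(∫ z', Q z z' * α (u z' + h z') ∂μ) - (∫ z', Q z z' * α (u z') ∂μ) -
          ∫ z', Q z z' * deriv α (u z') * h z' ∂μ| ≤
        M * C₂ * (μ Set.univ).toReal / 2 * B ^ 2 := by
  intro z
  have hC₂ : 0 ≤ C₂ := le_trans (abs_nonneg _) (hα'' 0)
  have hM : 0 ≤ M := le_trans (abs_nonneg _) (hQ z z)
  have hA : 0 ≤ A := le_trans (abs_nonneg _) (huA z)
  have hB : 0 ≤ B := le_trans (abs_nonneg _) (hhB z)
  have hαc : Continuous α := hα.continuous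
  have hd1 : ContDiff ℝ (1:ℕ) (deriv α) := (contDiff_succ_iff_deriv.mp (by exact_mod_cast hα)).2.2
  have hαd : Continuous (deriv α) := hd1.continuous
  -- integrability of the three integrands
  have i₁ : Integrable (fun z' => Q z z' * α (u z' + h z')) μ := by
    refine ⟨((hQmeas z).mul (hαc.measurable.comp (hum.add hhm))).aestronglyMeasurable, ?_⟩
    apply HasFiniteIntegral.of_bounded (C := M * (|α 0| + C₂ * (A + B) ^ 2))
    filter_upwards with z'
    have h1 : |α (u z' + h z')| ≤ |α 0| + C₂ * (A + B) ^ 2 := by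
      have h2 := alpha_bd hα hα0 hα'' (u z' + h z')
      have h3 : (u z' + h z') ^ 2 ≤ (A + B) ^ 2 := by
        rw [← sq_abs]
        apply pow_le_pow_left₀ (abs_nonneg _)
        calc |u z' + h z'| ≤ |u z'| + |h z'| := abs_add_le _ _
          _ ≤ A + B := add_le_add (huA z') (hhB z')
      nlinarith
    calc ‖Q z z' * α (u z' + h z')‖ = |Q z z'| * |α (u z' + h z')| := abs_mul _ _
      _ ≤ M * (|α 0| + C₂ * (A + B) ^ 2) :=
          mul_le_mul (hQ z z') h1 (abs_nonneg _) hM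
  have i₂ : Integrable (fun z' => Q z z' * α (u z')) μ := by
    refine ⟨((hQmeas z).mul (hαc.measurable.comp hum)).aestronglyMeasurable, ?_⟩
    apply HasFiniteIntegral.of_bounded (C := M * (|α 0| + C₂ * A ^ 2))
    filter_upwards with z'
    have h1 : |α (u z')| ≤ |α 0| + C₂ * A ^ 2 := by
      have h2 := alpha_bd hα hα0 hα'' (u z')
      have h3 : (u z') ^ 2 ≤ A ^ 2 := by
        rw [← sq_abs]; exact pow_le_pow_left₀ (abs_nonneg _) (huA z') 2
      nlinarith
    calc ‖Q z z' * α (u z')‖ = |Q z z'| * |α (u z')| := abs_mul _ _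
      _ ≤ M * (|α 0| + C₂ * A ^ 2) := mul_le_mul (hQ z z') h1 (abs_nonneg _) hM
  have i₃ : Integrable (fun z' => Q z z' * deriv α (u z') * h z') μ := by
    refine ⟨(((hQmeas z).mul (hαd.measurable.comp hum)).mul hhm).aestronglyMeasurable, ?_⟩
    apply HasFiniteIntegral.of_bounded (C := M * (C₂ * A) * B)
    filter_upwards with z'
    calc ‖Q z z' * deriv α (u z') * h z'‖
        = |Q z z'| * |deriv α (u z')| * |h z'| := by rw [Real.norm_eq_abs, abs_mul, abs_mul]
      _ ≤ M * (C₂ * A) * B := by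
          apply mul_le_mul _ (hhB z') (abs_nonneg _) (by positivity)
          apply mul_le_mul (hQ z z') _ (abs_nonneg _) hM
          calc |deriv α (u z')| ≤ C₂ * |u z'| := deriv_bd hα hα0 hα'' (u z')
            _ ≤ C₂ * A := mul_le_mul_of_nonneg_left (huA z') hC₂
  have combine : (∫ z', Q z z' * α (u z' + h z') ∂μ) - (∫ z', Q z z' * α (u z') ∂μ) -
      (∫ z', Q z z' * deriv α (u z') * h z' ∂μ)
      = ∫ z', (Q z z' * α (u z' + h z') - Q z z' * α (u z')
          - Q z z' * deriv α (u z') * h z') ∂μ := by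
    have i₁₂ : Integrable (fun z' => Q z z' * α (u z' + h z') - Q z z' * α (u z')) μ := i₁.sub i₂
    rw [← integral_sub i₁ i₂, ← integral_sub i₁₂ i₃]
  rw [combine]
  have hbd : ∀ z', ‖Q z z' * α (u z' + h z') - Q z z' * α (u z')
      - Q z z' * deriv α (u z') * h z'‖ ≤ M * (C₂ / 2 * B ^ 2) := by
    intro z'
    have key : |α (u z' + h z') - α (u z') - deriv α (u z') * h z'| ≤ C₂ / 2 * B ^ 2 := by
      calc |α (u z' + h z') - α (u z') - deriv α (u z') * h z'| ≤ C₂ / 2 * (h z') ^ 2 :=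
            taylor_bd hα hα'' (u z') (h z')
        _ ≤ C₂ / 2 * B ^ 2 := by
            apply mul_le_mul_of_nonneg_left _ (by linarith)
            rw [← sq_abs]; exact pow_le_pow_left₀ (abs_nonneg _) (hhB z') 2
    calc ‖Q z z' * α (u z' + h z') - Q z z' * α (u z') - Q z z' * deriv α (u z') * h z'‖
        = |Q z z' * (α (u z' + h z') - α (u z') - deriv α (u z') * h z')| := by
          rw [Real.norm_eq_abs]; ring_nf
      _ = |Q z z'| * |α (u z' + h z') - α (u z') - deriv α (u z') * h z'| := abs_mul _ _
      _ ≤ M * (C₂ / 2 * B ^ 2) := mul_le_mul (hQ z z') key (abs_nonneg _) hM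
  calc |∫ z', (Q z z' * α (u z' + h z') - Q z z' * α (u z')
        - Q z z' * deriv α (u z') * h z') ∂μ|
      ≤ M * (C₂ / 2 * B ^ 2) * (μ Set.univ).toReal :=
        norm_integral_le_of_norm_le_const (Filter.Eventually.of_forall hbd)
    _ = M * C₂ * (μ Set.univ).toReal / 2 * B ^ 2 := by ring
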